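/- Let n ≥ 3 be an integer, m = n − 1, ρ < 1/(2m), and let (x, y) be a solution of the system (S_ρ) on ℝ such that for all t ∈ ℝ: 0 < x(t) < 1, x′(t) < 0, y(t) > 0, y′(t) > 0, and (x(t), y(t)) → (1, 0) as t → −∞. Then y(t)/t → (n−2)(1−2(n−1)ρ) and t·x(t) → (1−(n−1)ρ)/(1−2(n−1)ρ) as t → +∞. -/

import Mathlib

open Filter Set


/-- `IsEinsteinSystemSol m ρ x y` means the pair of differentiable functions `(x, y)` solves
the planar system `(S_ρ)`:
`(1 − 2mρ)·x′ = (m−1)(1−mρ)(1 − x²) − x·y` and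
`(1 − 2mρ)·y′ = −m(m−1)(1−(m+1)ρ)(1 − x²) + (1 + m − 4mρ)·x·y`,
arising from rotationally symmetric gradient steady ρ-Einstein solitons. -/
def IsEinsteinSystemSol (m ρ : ℝ) (x y : ℝ → ℝ) : Prop :=
  Differentiable ℝ x ∧ Differentiable ℝ y ∧
    (∀ t : ℝ, (1 - 2 * m * ρ) * deriv x t =
      (m - 1) * (1 - m * ρ) * (1 - x t ^ 2) - x t * y t) ∧
    (∀ t : ℝ, (1 - 2 * m * ρ) * deriv y t =
      -(m * (m - 1) * (1 - (m + 1) * ρ) * (1 - x t ^ 2)) + (1 + m - 4 * m * ρ) * x t * y t)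

/-- If the derivative of `w` tends to `c` at `+∞`, then `w t / t → c`. -/
lemma tendsto_div_linear {w : ℝ → ℝ} (hw : Differentiable ℝ w) {c : ℝ}
    (h : Tendsto (deriv w) atTop (nhds c)) :
    Tendsto (fun t => w t / t) atTop (nhds c) := by
  rw [Metric.tendsto_nhds]
  intro ε hε
  obtain ⟨T, hT⟩ := Filter.eventually_atTop.1 ((Metric.tendsto_nhds.1 h) (ε/2) (by positivity))
  set g : ℝ → ℝ := fun t => w t - c * t with hgdef
  have hgd : ∀ u : ℝ, DifferentiableAt ℝ g u :=
    fun u => (hw u).sub (differentiableAt_id.const_mul c)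
  have hder : ∀ u, deriv g u = deriv w u - c := by
    intro u
    have h1 : HasDerivAt g (deriv w u - c * 1) u :=
      (hw u).hasDerivAt.sub ((hasDerivAt_id u).const_mul c)
    simpa using h1.deriv
  have hbound : ∀ u ∈ Set.Ici T, ‖deriv g u‖ ≤ ε/2 := by
    intro u hu
    rw [hder, Real.norm_eq_abs]
    have h2 := hT u hu
    rw [Real.dist_eq] at h2
    exact h2.le
  have key : ∀ t, T ≤ t → |g t - g T| ≤ ε/2 * |t - T| := by
    intro t ht
    have h3 := Convex.norm_image_sub_le_of_norm_deriv_le (fun u _ => hgd u) hbound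
      (convex_Ici T) Set.self_mem_Ici ht
    simpa [Real.norm_eq_abs] using h3
  filter_upwards [eventually_ge_atTop T, eventually_gt_atTop 0,
    eventually_gt_atTop ((2*|g T| + ε*|T|)/ε)] with t h1 ht0 h2
  rw [Real.dist_eq]
  have e1 : w t / t - c = g t / t := by
    field_simp [hgdef]; ring
  rw [e1, abs_div, abs_of_pos ht0, div_lt_iff₀ ht0]
  have h3 : |g t| ≤ |g T| + ε/2*(t - T) := by
    have h4 := key t h1
    have h5 : |g t| - |g T| ≤ |g t - g T| := abs_sub_abs_le_abs_sub _ _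
    have h6 : |t - T| = t - T := abs_of_nonneg (by linarith)
    rw [h6] at h4
    linarith
  have h7 : 2*|g T| + ε*|T| < ε * t := by
    rw [div_lt_iff₀ hε] at h2
    linarith
  have h8 : -|T| ≤ T := neg_abs_le T
  nlinarith [abs_nonneg (g T), abs_nonneg T]

/-- If `deriv f ≤ -δ` on `[T, ∞)` with `δ > 0` and `f > 0` everywhere, contradiction. -/
lemma decay_false {f : ℝ → ℝ} (hf : Differentiable ℝ f) {δ T : ℝ} (hδ : 0 < δ)
    (h : ∀ t, T ≤ t → deriv f t ≤ -δ) (hpos : ∀ t, 0 < f t) : False := by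
  set g : ℝ → ℝ := fun t => f t + δ * t with hgdef
  have hgd : Differentiable ℝ g := hf.add (differentiable_id.const_mul δ)
  have hder : ∀ t, deriv g t = deriv f t + δ := by
    intro t
    have h1 : HasDerivAt g (deriv f t + δ * 1) t :=
      (hf t).hasDerivAt.add ((hasDerivAt_id t).const_mul δ)
    simpa using h1.deriv
  have hanti : AntitoneOn g (Set.Ici T) := by
    apply antitoneOn_of_deriv_nonpos (convex_Ici T) hgd.continuous.continuousOn
      (hgd.differentiableOn)
    intro t ht
    rw [interior_Ici] at ht
    rw [hder]
    linarith [h t ht.le]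
  set t2 : ℝ := T + f T / δ + 1 with ht2def
  have hfT : 0 < f T := hpos T
  have hfrac : 0 ≤ f T / δ := by positivity
  have ht2 : T ≤ t2 := by rw [ht2def]; linarith
  have hle := hanti Set.self_mem_Ici ht2 ht2
  have hc : δ * (f T / δ) = f T := by field_simp
  have hexp : δ * t2 = δ*T + f T + δ := by rw [ht2def]; rw [mul_add, mul_add, hc]; ring
  have hft2 := hpos t2
  simp only [hgdef] at hle
  rw [hexp] at hle
  linarith

/-- If `p T < c` and the derivative of `p` is negative whenever `p = c` (past `T`),
then `p` stays below `c` on `[T, ∞)`. -/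
lemma no_upcross {p : ℝ → ℝ} (hp : Differentiable ℝ p) {c T : ℝ} (hT : p T < c)
    (hder : ∀ t, T ≤ t → p t = c → deriv p t < 0) : ∀ t, T ≤ t → p t < c := by
  intro t ht
  by_contra hcon
  push_neg at hcon
  set S : Set ℝ := Set.Ici T ∩ p ⁻¹' Set.Ici c with hS
  have hSne : S.Nonempty := ⟨t, ht, hcon⟩
  have hScl : IsClosed S := isClosed_Ici.inter (isClosed_Ici.preimage hp.continuous)
  have hSbd : BddBelow S := ⟨T, fun u hu => hu.1⟩
  have ht0S : sInf S ∈ S := hScl.csInf_mem hSne hSbd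
  set t0 := sInf S with ht0def
  have hTt0 : T ≤ t0 := ht0S.1
  have hct0 : c ≤ p t0 := ht0S.2
  have hTlt : T < t0 := by
    rcases eq_or_lt_of_le hTt0 with h | h
    · exact absurd hct0 (by rw [← h]; exact not_le.2 hT)
    · exact h
  have hless : ∀ u, T ≤ u → u < t0 → p u < c := by
    intro u hu hu2
    by_contra hc2
    push_neg at hc2
    exact absurd (csInf_le hSbd ⟨hu, hc2⟩) (not_le.2 hu2)
  have hpt0 : p t0 = c := by
    refine le_antisymm ?_ hct0
    have hcont : Tendsto p (nhdsWithin t0 (Set.Iio t0)) (nhds (p t0)) :=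
      (hp.continuous.tendsto t0).mono_left nhdsWithin_le_nhds
    refine le_of_tendsto hcont ?_
    have hmem : Set.Ioo T t0 ∈ nhdsWithin t0 (Set.Iio t0) :=
      Ioo_mem_nhdsLT_of_mem ⟨hTlt, le_refl t0⟩
    filter_upwards [hmem] with u hu
    exact (hless u hu.1.le hu.2).le
  have hnonneg : 0 ≤ deriv p t0 := by
    have hds : HasDerivWithinAt p (deriv p t0) (Set.Iio t0) t0 :=
      (hp t0).hasDerivAt.hasDerivWithinAt
    rw [hasDerivWithinAt_iff_tendsto_slope] at hds
    have hdiff : Set.Iio t0 \ {t0} = Set.Iio t0 :=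
      Set.diff_singleton_eq_self (by simp)
    rw [hdiff] at hds
    refine ge_of_tendsto hds ?_
    have hmem : Set.Ioo T t0 ∈ nhdsWithin t0 (Set.Iio t0) :=
      Ioo_mem_nhdsLT_of_mem ⟨hTlt, le_refl t0⟩
    filter_upwards [hmem] with u hu
    have h1 : p u < p t0 := by rw [hpt0]; exact hless u hu.1.le hu.2
    have h2 : u - t0 < 0 := by linarith [hu.2]
    rw [slope_def_field]
    exact le_of_lt (div_pos_of_neg_of_neg (by linarith) h2)
  exact absurd (hder t0 hTt0 hpt0) (not_lt.2 hnonneg)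

set_option maxHeartbeats 1000000 in
/-- Quantitative rates of Proposition 4.4: along the soliton trajectory (`ρ < 1/(2m)`),
`y(t)/t → (n−2)(1−2(n−1)ρ)` and `t·x(t) → (1−(n−1)ρ)/(1−2(n−1)ρ)` as `t → +∞`. -/
theorem soliton_trajectory_rates (n : ℕ) (hn : 3 ≤ n) (m ρ : ℝ)
    (hm : m = (n : ℝ) - 1) (hρ : ρ < 1 / (2 * m)) (x y : ℝ → ℝ)
    (hsol : IsEinsteinSystemSol m ρ x y)
    (hx : ∀ t : ℝ, 0 < x t ∧ x t < 1) (hx' : ∀ t : ℝ, deriv x t < 0)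
    (hy : ∀ t : ℝ, 0 < y t) (hy' : ∀ t : ℝ, 0 < deriv y t)
    (hlim : Filter.Tendsto (fun t => (x t, y t)) Filter.atBot (nhds (1, 0))) :
    Filter.Tendsto (fun t => y t / t) Filter.atTop
        (nhds (((n : ℝ) - 2) * (1 - 2 * ((n : ℝ) - 1) * ρ))) ∧
      Filter.Tendsto (fun t => t * x t) Filter.atTop
        (nhds ((1 - ((n : ℝ) - 1) * ρ) / (1 - 2 * ((n : ℝ) - 1) * ρ))) := by
  obtain ⟨hdx, hdy, hX, hY⟩ := hsol
  have hm2 : (2:ℝ) ≤ m := by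
    rw [hm]
    have : (3:ℝ) ≤ (n:ℝ) := by exact_mod_cast hn
    linarith
  have hmpos : 0 < 2 * m := by linarith
  have ha : 0 < 1 - 2 * m * ρ := by
    have := (lt_div_iff₀ hmpos).1 hρ
    nlinarith
  have hmρ : m * ρ < 1 := by nlinarith
  have hc1 : 0 < (m - 1) * (1 - m * ρ) := by nlinarith
  have hk : 0 < 1 + m - 4 * m * ρ := by nlinarith
  -- x is antitone and converges to L = infimum
  have hxa : StrictAnti x := strictAnti_of_deriv_neg hx'
  have hbdd : BddBelow (Set.range x) := ⟨0, by rintro _ ⟨t, rfl⟩; exact (hx t).1.le⟩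
  have hxL : Tendsto x atTop (nhds (⨅ t, x t)) := tendsto_atTop_ciInf hxa.antitone hbdd
  set L := ⨅ t, x t with hLdef
  have hL0 : 0 ≤ L := le_ciInf fun t => (hx t).1.le
  have hLle : ∀ t, L ≤ x t := fun t => ciInf_le hbdd t
  have hL1 : L < 1 := (hLle 0).trans_lt (hx 0).2
  -- the auxiliary function w = y + k x with linear growth
  set w : ℝ → ℝ := fun t => y t + (1 + m - 4 * m * ρ) * x t with hwdef
  have hwD : Differentiable ℝ w := hdy.add (hdx.const_mul _)
  have hwderiv : ∀ t, deriv w t = (m - 1) * (1 - 2 * m * ρ) * (1 - x t ^ 2) := by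
    intro t
    have h1 : HasDerivAt w (deriv y t + (1 + m - 4 * m * ρ) * deriv x t) t :=
      (hdy t).hasDerivAt.add ((hdx t).hasDerivAt.const_mul _)
    rw [h1.deriv]
    apply mul_left_cancel₀ (ne_of_gt ha)
    linear_combination hY t + (1 + m - 4 * m * ρ) * hX t
  have hwlim : Tendsto (deriv w) atTop
      (nhds ((m - 1) * (1 - 2 * m * ρ) * (1 - L ^ 2))) := by
    have hc : Continuous fun z : ℝ => (m - 1) * (1 - 2 * m * ρ) * (1 - z ^ 2) := by continuity
    have h2 := (hc.tendsto L).comp hxL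
    exact h2.congr fun t => (hwderiv t).symm
  have hwdiv : Tendsto (fun t => w t / t) atTop
      (nhds ((m - 1) * (1 - 2 * m * ρ) * (1 - L ^ 2))) := tendsto_div_linear hwD hwlim
  have hxdiv : Tendsto (fun t => x t / t) atTop (nhds 0) := hxL.div_atTop tendsto_id
  have hydivL : Tendsto (fun t => y t / t) atTop
      (nhds ((m - 1) * (1 - 2 * m * ρ) * (1 - L ^ 2))) := by
    have h2 := hwdiv.sub (hxdiv.const_mul (1 + m - 4 * m * ρ))
    rw [mul_zero, sub_zero] at h2
    refine h2.congr fun t => ?_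
    simp only [hwdef]
    ring
  have hLsq : L ^ 2 < 1 := by nlinarith
  have hbL : 0 < (m - 1) * (1 - 2 * m * ρ) * (1 - L ^ 2) := by
    apply mul_pos (mul_pos (by linarith) ha)
    linarith
  -- y tends to infinity
  have hytop : Tendsto y atTop atTop := by
    set b := (m - 1) * (1 - 2 * m * ρ) * (1 - L ^ 2) with hbdef
    have h1 : ∀ᶠ t in atTop, b / 2 * t ≤ y t := by
      filter_upwards [Metric.tendsto_nhds.1 hydivL (b/2) (by positivity),
        eventually_gt_atTop 0] with t hd ht
      rw [Real.dist_eq] at hd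
      have h3 := (abs_lt.1 hd).1
      have h4 : b / 2 < y t / t := by linarith
      calc b/2*t ≤ (y t / t) * t := by nlinarith
        _ = y t := div_mul_cancel₀ _ ht.ne'
    exact tendsto_atTop_mono' atTop h1 (Tendsto.const_mul_atTop (by positivity) tendsto_id)
  -- L = 0
  have hL : L = 0 := by
    by_contra hne
    have hLpos : 0 < L := hL0.lt_of_ne (Ne.symm hne)
    have hylarge : ∀ᶠ t in atTop,
        ((m - 1) * (1 - m * ρ) + (1 - 2 * m * ρ)) / L ≤ y t :=
      hytop.eventually_ge_atTop _
    obtain ⟨T, hT⟩ := eventually_atTop.1 hylarge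
    have hder : ∀ t, T ≤ t → deriv x t ≤ -1 := by
      intro t ht
      have e1 := hX t
      have h5 := hT t ht
      rw [div_le_iff₀ hLpos] at h5
      have h6 : L * y t ≤ x t * y t := by
        have := hy t
        nlinarith [hLle t]
      have h7 : (1 - 2 * m * ρ) * deriv x t ≤ -(1 - 2 * m * ρ) := by nlinarith [sq_nonneg (x t)]
      nlinarith [hx' t]
    exact absurd (decay_false hdx one_pos hder fun t => (hx t).1) (by simp)
  rw [hL] at hxL hydivL
  simp only [ne_eq, OfNat.ofNat_ne_zero, not_false_eq_true, zero_pow, sub_zero, mul_one] at hydivL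
  have hx0 : Tendsto x atTop (nhds 0) := hxL
  -- first limit
  have goal1 : Tendsto (fun t => y t / t) atTop
      (nhds (((n : ℝ) - 2) * (1 - 2 * ((n : ℝ) - 1) * ρ))) := by
    have he : ((n:ℝ) - 2) * (1 - 2 * ((n:ℝ) - 1) * ρ) = (m - 1) * (1 - 2 * m * ρ) := by
      rw [hm]; ring
    rw [he]
    exact hydivL
  refine ⟨goal1, ?_⟩
  -- now show x t * y t → (m-1)(1-mρ)
  have hpD : Differentiable ℝ (fun t => x t * y t) := hdx.mul hdy
  have hplow : ∀ t, (m - 1) * (1 - m * ρ) * (1 - x t ^ 2) < x t * y t := by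
    intro t
    have e1 := hX t
    have h2 : (1 - 2 * m * ρ) * deriv x t < 0 := mul_neg_of_pos_of_neg ha (hx' t)
    linarith
  have hpderiv : ∀ t, (1 - 2 * m * ρ) * deriv (fun t => x t * y t) t =
      y t * ((m - 1) * (1 - m * ρ) * (1 - x t ^ 2) - x t * y t) +
      x t * (-(m * (m - 1) * (1 - (m + 1) * ρ) * (1 - x t ^ 2)) +
        (1 + m - 4 * m * ρ) * (x t * y t)) := by
    intro t
    have hD : deriv (fun t => x t * y t) t = deriv x t * y t + x t * deriv y t :=
      ((hdx t).hasDerivAt.mul (hdy t).hasDerivAt).deriv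
    rw [hD]
    linear_combination y t * hX t + x t * hY t
  have hupper : ∀ ε : ℝ, 0 < ε → ∀ᶠ t in atTop, x t * y t < (m - 1) * (1 - m * ρ) + ε := by
    intro ε hε
    set c : ℝ := (m - 1) * (1 - m * ρ) + ε / 2 with hcdef
    have hcpos : 0 < c := by rw [hcdef]; linarith
    set C : ℝ := |m * (m - 1) * (1 - (m + 1) * ρ)| + (1 + m - 4 * m * ρ) * c with hCdef
    have hCpos : 0 < C := by
      rw [hCdef]
      have := abs_nonneg (m * (m - 1) * (1 - (m + 1) * ρ))
      nlinarith
    clear_value c C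
    obtain ⟨T0, hT0⟩ := eventually_atTop.1 (hytop.eventually_ge_atTop ((2 * C + 2) / ε))
    have hder : ∀ t, T0 ≤ t → x t * y t = c → deriv (fun t => x t * y t) t < 0 := by
      intro t ht hpe
      have e := hpderiv t
      rw [hpe] at e
      have hyC : (2 * C + 2) / ε ≤ y t := hT0 t ht
      have hyC' : 2 * C + 2 ≤ ε * y t := by
        rw [div_le_iff₀ hε] at hyC; linarith
      have hx1 := (hx t).1
      have hx2 := (hx t).2
      have hxsq : 0 ≤ 1 - x t ^ 2 := by nlinarith
      have hxsq1 : 1 - x t ^ 2 ≤ 1 := by nlinarith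
      -- bound the first term
      have hterm1 : y t * ((m - 1) * (1 - m * ρ) * (1 - x t ^ 2) - c) ≤ y t * (-(ε/2)) := by
        apply mul_le_mul_of_nonneg_left _ (hy t).le
        have : (m - 1) * (1 - m * ρ) * (1 - x t ^ 2) ≤ (m - 1) * (1 - m * ρ) := by nlinarith
        rw [hcdef]; linarith
      -- bound the second term
      set z : ℝ := -(m * (m - 1) * (1 - (m + 1) * ρ) * (1 - x t ^ 2)) +
        (1 + m - 4 * m * ρ) * c with hzdef
      clear_value z
      have hzC : z ≤ C := by
        rw [hzdef, hCdef]
        have h1 : -(m * (m - 1) * (1 - (m + 1) * ρ) * (1 - x t ^ 2)) ≤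
            |m * (m - 1) * (1 - (m + 1) * ρ)| := by
          have h2 : -(m * (m - 1) * (1 - (m + 1) * ρ) * (1 - x t ^ 2)) ≤
              |m * (m - 1) * (1 - (m + 1) * ρ) * (1 - x t ^ 2)| := neg_le_abs _
          have h3 : |m * (m - 1) * (1 - (m + 1) * ρ) * (1 - x t ^ 2)| =
              |m * (m - 1) * (1 - (m + 1) * ρ)| * |1 - x t ^ 2| := abs_mul _ _
          have h4 : |1 - x t ^ 2| ≤ 1 := by rw [abs_of_nonneg hxsq]; exact hxsq1
          nlinarith [abs_nonneg (m * (m - 1) * (1 - (m + 1) * ρ))]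
        linarith
      have hterm2 : x t * z ≤ C := by
        rcases le_or_gt z 0 with hz | hz
        · nlinarith
        · nlinarith
      have hfin : (1 - 2 * m * ρ) * deriv (fun t => x t * y t) t ≤ -1 := by
        rw [e]
        have h9 : y t * (-(ε/2)) ≤ -(C + 1) := by linarith only [hyC']
        linarith only [hterm1, hterm2, h9]
      by_contra hDge
      push_neg at hDge
      have h10 : 0 ≤ (1 - 2 * m * ρ) * deriv (fun t => x t * y t) t :=
        mul_nonneg ha.le hDge
      linarith only [hfin, h10]
    -- there is T1 ≥ T0 where x y < c
    have hstepA : ∃ T1, T0 ≤ T1 ∧ x T1 * y T1 < c := by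
      by_contra hcon
      push_neg at hcon
      have hδ : 0 < ε / (2 * (1 - 2 * m * ρ)) := div_pos hε (by linarith)
      have hder2 : ∀ t, T0 ≤ t → deriv x t ≤ -(ε / (2 * (1 - 2 * m * ρ))) := by
        intro t ht
        have e1 := hX t
        have h5 := hcon t ht
        have hx1 := (hx t).1
        have h6 : (1 - 2 * m * ρ) * deriv x t ≤ -(ε/2) := by
          rw [hcdef] at h5
          linarith only [e1, h5, mul_nonneg hc1.le (sq_nonneg (x t))]
        rw [show -(ε / (2 * (1 - 2 * m * ρ))) = (-ε) / (2 * (1 - 2 * m * ρ)) by ring,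
          le_div_iff₀ (show (0:ℝ) < 2 * (1 - 2 * m * ρ) by linarith)]
        linarith only [h6]
      exact absurd (decay_false hdx hδ hder2 fun t => (hx t).1) (by simp)
    obtain ⟨T1, hT1, hpT1⟩ := hstepA
    have hinv := no_upcross hpD hpT1 fun t ht hpe => hder t (hT1.trans ht) hpe
    filter_upwards [eventually_ge_atTop T1] with t ht
    have := hinv t ht
    rw [hcdef] at this
    linarith
  have hlower : ∀ ε : ℝ, 0 < ε → ∀ᶠ t in atTop, (m - 1) * (1 - m * ρ) - ε < x t * y t := by
    intro ε hε
    have h0 : Tendsto (fun t => (m - 1) * (1 - m * ρ) * x t ^ 2) atTop (nhds 0) := by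
      have h1 : Tendsto (fun t => (m - 1) * (1 - m * ρ) * (x t * x t)) atTop
          (nhds ((m - 1) * (1 - m * ρ) * (0 * 0))) := tendsto_const_nhds.mul (hx0.mul hx0)
      simpa [pow_two] using h1
    have h2 : ∀ᶠ t in atTop, (m - 1) * (1 - m * ρ) * x t ^ 2 < ε :=
      h0.eventually_lt_const hε
    filter_upwards [h2] with t h3
    have := hplow t
    nlinarith
  have hplim : Tendsto (fun t => x t * y t) atTop (nhds ((m - 1) * (1 - m * ρ))) := by
    rw [Metric.tendsto_nhds]
    intro ε hε
    filter_upwards [hupper ε hε, hlower ε hε] with t h1 h2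
    rw [Real.dist_eq, abs_lt]
    constructor <;> linarith
  -- final limit
  have hbne : (m - 1) * (1 - 2 * m * ρ) ≠ 0 := ne_of_gt (by nlinarith)
  have hfin := hplim.mul (hydivL.inv₀ hbne)
  have heq : ∀ᶠ t in atTop, x t * y t * (y t / t)⁻¹ = t * x t := by
    filter_upwards [eventually_gt_atTop 0] with t ht
    have hyt := (hy t).ne'
    rw [inv_div]
    field_simp
  have hgoal2 := hfin.congr' heq
  have hcc : (m - 1) * (1 - m * ρ) * ((m - 1) * (1 - 2 * m * ρ))⁻¹ =
      (1 - ((n : ℝ) - 1) * ρ) / (1 - 2 * ((n : ℝ) - 1) * ρ) := by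
    rw [← hm, ← div_eq_mul_inv]
    rw [div_eq_div_iff (by nlinarith) (by linarith)]
    ring
  rw [hcc] at hgoal2
  exact hgoal2
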